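/- (Lemma B.4) Let s ∈ (0,1), let N be an integer with 2s < N < 4s, let Ω ⊂ ℝ^N be a bounded open set, let K ⊂ Ω be compact, and let b ∈ C(Ω̄) ∩ C¹(Ω). Set α_{N,s} := ∫_{ℝ^N} U_{0,1}(y) h(y) dy, which is a finite number. Then lim_{λ→∞} sup_{x∈K} | λ^{2s} ∫_Ω b(y) U_{x,λ}(y) λ^{(N−2s)/2} h(λ(x−y)) dy − α_{N,s} b(x) | = 0. -/

import Mathlib

open MeasureTheory Real

noncomputable section

abbrev Euc (N : ℕ) := EuclideanSpace ℝ (Fin N)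

/-- The Aubin–Talenti bubble `U_{x,λ}(y) = (λ/(1+λ²|x-y|²))^{(N-2s)/2}`. -/
def bubble (N : ℕ) (s : ℝ) (x : Euc N) (lam : ℝ) (y : Euc N) : ℝ :=
  (lam / (1 + lam ^ 2 * ‖x - y‖ ^ 2)) ^ (((N : ℝ) - 2 * s) / 2)

/-- The bubble–Green discrepancy `h(z) = |z|^{-(N-2s)} - (1+|z|²)^{-(N-2s)/2}`. -/
def hfun (N : ℕ) (s : ℝ) (z : Euc N) : ℝ :=
  ‖z‖ ^ (-((N : ℝ) - 2 * s)) - (1 + ‖z‖ ^ 2) ^ (-(((N : ℝ) - 2 * s) / 2))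

section Aux
open Set Metric Filter


lemma integrableOn_norm_rpow_cball {N : ℕ} {a : ℝ} (ha : 0 < a) (haN : a < N) :
    IntegrableOn (fun z : Euc N => ‖z‖ ^ (-a)) (Metric.closedBall 0 1) volume := by
  have hN : 0 < N := by exact_mod_cast ha.trans haN
  haveI : Nontrivial (Euc N) := by
    have : 0 < Module.finrank ℝ (Euc N) := by rw [finrank_euclideanSpace_fin]; exact hN
    exact Module.nontrivial_of_finrank_pos this
  constructor
  · exact (by fun_prop : Measurable fun z : Euc N => ‖z‖ ^ (-a)).aestronglyMeasurable.restrict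
  · rw [hasFiniteIntegral_iff_ofReal (Eventually.of_forall fun z => rpow_nonneg (norm_nonneg _) _)]
    -- dyadic annuli
    set A : ℕ → Set (Euc N) := fun n => {z | (2:ℝ)⁻¹ ^ (n+1) < ‖z‖ ∧ ‖z‖ ≤ (2:ℝ)⁻¹ ^ n} with hA
    have hcover : Metric.closedBall (0 : Euc N) 1 ⊆ {0} ∪ ⋃ n, A n := by
      intro z hz
      rcases eq_or_ne z 0 with rfl | hz0
      · exact Or.inl rfl
      right
      have hz1 : ‖z‖ ≤ 1 := by simpa [mem_closedBall, dist_zero_right] using hz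
      have hzpos : 0 < ‖z‖ := norm_pos_iff.2 hz0
      have hex : ∃ n : ℕ, (2:ℝ)⁻¹ ^ (n+1) < ‖z‖ := by
        obtain ⟨m, hm⟩ := exists_pow_lt_of_lt_one hzpos (by norm_num : (2:ℝ)⁻¹ < 1)
        exact ⟨m, lt_of_le_of_lt
          (pow_le_pow_of_le_one (by norm_num) (by norm_num) (Nat.le_succ m)) hm⟩
      refine mem_iUnion.2 ⟨Nat.find hex, Nat.find_spec hex, ?_⟩
      rcases Nat.eq_zero_or_pos (Nat.find hex) with h0 | hpos
      · rw [h0, pow_zero]; exact hz1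
      · have := Nat.find_min hex (Nat.sub_lt hpos one_pos)
        rw [not_lt] at this
        calc ‖z‖ ≤ 2⁻¹ ^ (Nat.find hex - 1 + 1) := this
          _ = 2⁻¹ ^ Nat.find hex := by rw [Nat.sub_add_cancel hpos]
    -- bound the integral
    calc ∫⁻ z in Metric.closedBall (0:Euc N) 1, ENNReal.ofReal (‖z‖ ^ (-a))
        ≤ ∫⁻ z in {0} ∪ ⋃ n, A n, ENNReal.ofReal (‖z‖ ^ (-a)) := lintegral_mono_set hcover
      _ ≤ (∫⁻ z in ({0}:Set (Euc N)), ENNReal.ofReal (‖z‖ ^ (-a)))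
            + ∫⁻ z in ⋃ n, A n, ENNReal.ofReal (‖z‖ ^ (-a)) := lintegral_union_le _ _ _
      _ < ⊤ := by
        have h0 : (∫⁻ z in ({0}:Set (Euc N)), ENNReal.ofReal (‖z‖ ^ (-a))) = 0 :=
          setLIntegral_measure_zero _ _ (measure_singleton 0)
        rw [h0, zero_add]
        refine lt_of_le_of_lt (lintegral_iUnion_le _ _) ?_
        -- per-annulus bound
        have hterm : ∀ n : ℕ, (∫⁻ z in A n, ENNReal.ofReal (‖z‖ ^ (-a)))
            ≤ ENNReal.ofReal ((2:ℝ) ^ a * ((2:ℝ) ^ (a - (N:ℝ))) ^ n)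
              * volume (Metric.ball (0:Euc N) 1) := by
          intro n
          have hr : ∀ k : ℕ, ((2:ℝ)⁻¹ ^ k) = (2:ℝ) ^ (-(k:ℝ)) := by
            intro k
            rw [Real.rpow_neg (by norm_num), Real.rpow_natCast, inv_pow]
          have hb1 : ∀ z ∈ A n, ENNReal.ofReal (‖z‖ ^ (-a))
              ≤ ENNReal.ofReal ((2:ℝ) ^ (((n:ℝ)+1) * a)) := by
            intro z hz
            apply ENNReal.ofReal_le_ofReal
            have h1 : (0:ℝ) < (2:ℝ)⁻¹ ^ (n+1) := by positivity
            have := Real.rpow_le_rpow_of_nonpos h1 hz.1.le (neg_nonpos.2 ha.le)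
            refine this.trans_eq ?_
            rw [hr (n+1), ← Real.rpow_mul (by norm_num : (0:ℝ) ≤ 2)]
            congr 1
            push_cast
            ring
          calc (∫⁻ z in A n, ENNReal.ofReal (‖z‖ ^ (-a)))
              ≤ ∫⁻ _ in A n, ENNReal.ofReal ((2:ℝ) ^ (((n:ℝ)+1) * a)) :=
                setLIntegral_mono' (by
                  have : A n = {z : Euc N | (2:ℝ)⁻¹ ^ (n+1) < ‖z‖} ∩ Metric.closedBall 0 ((2:ℝ)⁻¹ ^ n) := by
                    ext z; simp [hA, mem_closedBall, dist_zero_right]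
                  rw [this]
                  exact ((isOpen_lt continuous_const continuous_norm).measurableSet).inter
                    measurableSet_closedBall) hb1
            _ = ENNReal.ofReal ((2:ℝ) ^ (((n:ℝ)+1) * a)) * volume (A n) := by
                rw [setLIntegral_const]
            _ ≤ ENNReal.ofReal ((2:ℝ) ^ (((n:ℝ)+1) * a))
                  * (ENNReal.ofReal (((2:ℝ)⁻¹ ^ n) ^ (N:ℕ)) * volume (Metric.ball (0:Euc N) 1)) := by
                gcongr
                have hsub : A n ⊆ Metric.closedBall 0 ((2:ℝ)⁻¹ ^ n) := fun z hz => by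
                  simpa [mem_closedBall, dist_zero_right] using hz.2
                refine (measure_mono hsub).trans_eq ?_
                have := Measure.addHaar_closedBall (volume : Measure (Euc N)) 0
                  (by positivity : (0:ℝ) ≤ (2:ℝ)⁻¹ ^ n)
                rw [this, finrank_euclideanSpace_fin]
            _ = ENNReal.ofReal ((2:ℝ) ^ a * ((2:ℝ) ^ (a - (N:ℝ))) ^ n)
                  * volume (Metric.ball (0:Euc N) 1) := by
                rw [← mul_assoc, ← ENNReal.ofReal_mul (by positivity)]
                congr 2
                rw [hr n, ← Real.rpow_natCast ((2:ℝ) ^ (-(n:ℝ))) N,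
                  ← Real.rpow_natCast ((2:ℝ) ^ (a - (N:ℝ))) n,
                  ← Real.rpow_mul (by norm_num : (0:ℝ) ≤ 2),
                  ← Real.rpow_mul (by norm_num : (0:ℝ) ≤ 2),
                  ← Real.rpow_add (by norm_num : (0:ℝ) < 2),
                  ← Real.rpow_add (by norm_num : (0:ℝ) < 2)]
                congr 1
                ring
        refine lt_of_le_of_lt (ENNReal.tsum_le_tsum hterm) ?_
        rw [ENNReal.tsum_mul_right]
        refine ENNReal.mul_lt_top ?_ measure_ball_lt_top
        have hq : (2:ℝ) ^ (a - (N:ℝ)) < 1 :=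
          Real.rpow_lt_one_of_one_lt_of_neg (by norm_num) (by linarith)
        have hsum : Summable (fun n : ℕ => (2:ℝ) ^ a * ((2:ℝ) ^ (a - (N:ℝ))) ^ n) :=
          (summable_geometric_of_lt_one (by positivity) hq).mul_left _
        rw [← ENNReal.ofReal_tsum_of_nonneg (fun n => by positivity) hsum]
        exact ENNReal.ofReal_lt_top

lemma bubble_zero_one {N : ℕ} {s : ℝ} (z : Euc N) :
    bubble N s 0 1 z = (1 + ‖z‖ ^ 2) ^ (-(((N : ℝ) - 2 * s) / 2)) := by
  have h1 : (0:ℝ) < 1 + ‖z‖ ^ 2 := by positivity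
  rw [bubble, zero_sub, norm_neg, one_pow, one_mul, one_div, Real.inv_rpow h1.le,
    ← Real.rpow_neg h1.le]

-- Bernoulli-type bound
lemma one_sub_rpow_le {q u : ℝ} (hq0 : 0 ≤ q) (hq1 : q ≤ 1) (hu : 0 ≤ u) :
    1 - (1 + u) ^ (-q) ≤ q * u := by
  have h1u : (0:ℝ) < 1 + u := by linarith
  rcases le_or_gt 1 (q * u) with h | h
  · have : (0:ℝ) ≤ (1 + u) ^ (-q) := rpow_nonneg h1u.le _
    linarith
  · have hber : (1 + u) ^ q ≤ 1 + q * u := rpow_one_add_le_one_add_mul_self (by linarith) hq0 hq1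
    have hpos : (0:ℝ) < (1 + u) ^ q := rpow_pos_of_pos h1u _
    have h2 : (1 + q * u)⁻¹ ≤ ((1 + u) ^ q)⁻¹ := by
      exact inv_anti₀ hpos hber
    have h3 : 1 - q * u ≤ (1 + q * u)⁻¹ := by
      have hqu : (0:ℝ) < 1 + q * u := by positivity
      have hinv : (1 + q * u) * (1 + q * u)⁻¹ = 1 := mul_inv_cancel₀ hqu.ne'
      nlinarith [inv_nonneg.2 hqu.le, sq_nonneg (q*u)]
    rw [Real.rpow_neg h1u.le]
    nlinarith

lemma norm_rpow_sq {N : ℕ} (z : Euc N) (c : ℝ) :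
    ‖z‖ ^ (2 * c) = (‖z‖ ^ (2:ℕ)) ^ c := by
  rw [← Real.rpow_natCast_mul (norm_nonneg z) 2 c]
  norm_num

lemma hfun_nonneg {N : ℕ} {s : ℝ} (ha : 0 < (N:ℝ) - 2*s) {z : Euc N} (hz : z ≠ 0) :
    0 ≤ hfun N s z := by
  set a : ℝ := (N:ℝ) - 2*s with ha'
  have ht : (0:ℝ) < ‖z‖ ^ (2:ℕ) := by
    have := norm_pos_iff.2 hz; positivity
  have h1 : ‖z‖ ^ (-a) = (‖z‖ ^ (2:ℕ)) ^ (-(a/2)) := by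
    rw [← norm_rpow_sq]; ring_nf
  rw [hfun, sub_nonneg, ← ha', h1]
  exact Real.rpow_le_rpow_of_nonpos ht (by linarith [sq_nonneg ‖z‖]) (by linarith)

lemma hfun_le {N : ℕ} {s : ℝ} (z : Euc N) :
    hfun N s z ≤ ‖z‖ ^ (-((N:ℝ) - 2*s)) := by
  have : (0:ℝ) ≤ (1 + ‖z‖ ^ 2) ^ (-(((N:ℝ) - 2*s)/2)) := Real.rpow_nonneg (by positivity) _
  rw [hfun]; linarith

lemma hfun_le' {N : ℕ} {s : ℝ} (ha : 0 < (N:ℝ) - 2*s) (ha2 : (N:ℝ) - 2*s < 2)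
    {z : Euc N} (hz : z ≠ 0) :
    hfun N s z ≤ (((N:ℝ) - 2*s)/2) * ‖z‖ ^ (-(((N:ℝ) - 2*s) + 2)) := by
  set a : ℝ := (N:ℝ) - 2*s with ha'
  set q : ℝ := a / 2 with hq'
  have hq0 : 0 ≤ q := by rw [hq']; linarith
  have hq1 : q ≤ 1 := by rw [hq']; linarith
  have htpos : (0:ℝ) < ‖z‖ := norm_pos_iff.2 hz
  have ht : (0:ℝ) < ‖z‖ ^ (2:ℕ) := by positivity
  set u : ℝ := (‖z‖ ^ (2:ℕ))⁻¹ with hu'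
  have hu : 0 ≤ u := by positivity
  have hsplit : (1:ℝ) + ‖z‖ ^ 2 = ‖z‖ ^ (2:ℕ) * (1 + u) := by
    rw [hu']; field_simp; ring
  have hmul : ((1:ℝ) + ‖z‖ ^ 2) ^ (-q) = (‖z‖ ^ (2:ℕ)) ^ (-q) * (1 + u) ^ (-q) := by
    rw [hsplit, Real.mul_rpow ht.le (by linarith)]
  have h1 : ‖z‖ ^ (-a) = (‖z‖ ^ (2:ℕ)) ^ (-q) := by
    rw [← norm_rpow_sq]; rw [hq']; ring_nf
  have hkey : 1 - (1 + u) ^ (-q) ≤ q * u := one_sub_rpow_le hq0 hq1 hu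
  have h2 : hfun N s z = (‖z‖ ^ (2:ℕ)) ^ (-q) * (1 - (1 + u) ^ (-q)) := by
    rw [hfun, ← ha', ← hq', h1, hmul]; ring
  have h3 : hfun N s z ≤ (‖z‖ ^ (2:ℕ)) ^ (-q) * (q * u) := by
    rw [h2]
    exact mul_le_mul_of_nonneg_left hkey (Real.rpow_nonneg ht.le _)
  refine h3.trans_eq ?_
  have h4 : (‖z‖ ^ (2:ℕ)) ^ (-q) * u = ‖z‖ ^ (-(a + 2)) := by
    rw [hu', ← h1, ← Real.rpow_natCast ‖z‖ 2, ← Real.rpow_neg htpos.le,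
      ← Real.rpow_add htpos]
    norm_num
    ring_nf
  calc (‖z‖ ^ (2:ℕ)) ^ (-q) * (q * u) = q * ((‖z‖ ^ (2:ℕ)) ^ (-q) * u) := by ring
    _ = a / 2 * ‖z‖ ^ (-(a + 2)) := by rw [h4, hq']

lemma bubble_zero_one_nonneg {N : ℕ} {s : ℝ} (z : Euc N) : 0 ≤ bubble N s 0 1 z := by
  rw [bubble_zero_one]; positivity

lemma bubble_zero_one_le_one {N : ℕ} {s : ℝ} (hs : 0 ≤ (N:ℝ) - 2*s) (z : Euc N) :
    bubble N s 0 1 z ≤ 1 := by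
  rw [bubble_zero_one]
  exact Real.rpow_le_one_of_one_le_of_nonpos (le_add_of_nonneg_right (by positivity)) (by linarith)

lemma ae_ne_zero {N : ℕ} (hN : 0 < N) : ∀ᵐ z : Euc N, z ≠ (0:Euc N) := by
  haveI : Nontrivial (Euc N) := by
    have : 0 < Module.finrank ℝ (Euc N) := by rw [finrank_euclideanSpace_fin]; exact hN
    exact Module.nontrivial_of_finrank_pos this
  rw [ae_iff]
  simpa using measure_singleton (0 : Euc N)

lemma integrable_Uh {N : ℕ} {s : ℝ} (hs0 : 0 < s) (hs1 : s < 1)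
    (hN1 : 2 * s < (N : ℝ)) (hN2 : (N : ℝ) < 4 * s) :
    Integrable (fun z : Euc N => bubble N s 0 1 z * hfun N s z) volume := by
  set a : ℝ := (N:ℝ) - 2*s with ha'
  have ha : 0 < a := by rw [ha']; linarith
  have haN : a < N := by rw [ha']; linarith
  have ha2 : a < 2 := by rw [ha']; linarith
  have h2a2 : (N:ℝ) < 2*a + 2 := by rw [ha']; linarith
  have hN : 0 < N := by exact_mod_cast hs0.trans (by linarith : s < (N:ℝ))
  have hmeas : Measurable fun z : Euc N => bubble N s 0 1 z * hfun N s z := by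
    unfold bubble hfun; fun_prop
  rw [← integrableOn_univ, ← union_compl_self (Metric.closedBall (0:Euc N) 1)]
  apply IntegrableOn.union
  · -- near 0
    apply Integrable.mono' (integrableOn_norm_rpow_cball ha haN)
      hmeas.aestronglyMeasurable.restrict
    refine ae_restrict_of_ae ?_
    filter_upwards [ae_ne_zero hN] with z hz
    rw [Real.norm_eq_abs, abs_mul, abs_of_nonneg (bubble_zero_one_nonneg z),
      abs_of_nonneg (hfun_nonneg ha hz)]
    calc bubble N s 0 1 z * hfun N s z ≤ 1 * ‖z‖ ^ (-a) :=
          mul_le_mul (bubble_zero_one_le_one ha.le z) (hfun_le z)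
            (hfun_nonneg ha hz) zero_le_one
      _ = ‖z‖ ^ (-a) := one_mul _
  · -- far away
    have hfr : ((Module.finrank ℝ (Euc N) : ℝ)) < 2*a + 2 := by
      rw [finrank_euclideanSpace_fin]; exact h2a2
    set C : ℝ := (2:ℝ) ^ (a/2) * (a/2 * (2:ℝ) ^ (a+2)) with hC'
    have hint : Integrable (fun z : Euc N => C * (1+‖z‖) ^ (-(2*a+2))) volume :=
      (integrable_one_add_norm hfr).const_mul C
    apply Integrable.mono' hint.integrableOn hmeas.aestronglyMeasurable.restrict
    filter_upwards [ae_restrict_mem measurableSet_closedBall.compl] with z hz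
    have hz1 : 1 < ‖z‖ := by
      simpa [Metric.mem_closedBall, dist_zero_right] using hz
    have hz0 : z ≠ 0 := by
      intro h; rw [h, norm_zero] at hz1; linarith
    have hzpos : (0:ℝ) < ‖z‖ := by linarith
    rw [Real.norm_eq_abs, abs_mul, abs_of_nonneg (bubble_zero_one_nonneg z),
      abs_of_nonneg (hfun_nonneg ha hz0)]
    have hU : bubble N s 0 1 z ≤ (2:ℝ) ^ (a/2) * (1+‖z‖) ^ (-a) := by
      rw [bubble_zero_one, ← neg_div]
      exact rpow_neg_one_add_norm_sq_le z ha
    have hh : hfun N s z ≤ a/2 * (2:ℝ) ^ (a+2) * (1+‖z‖) ^ (-(a+2)) := by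
      refine (hfun_le' ha ha2 hz0).trans ?_
      rw [mul_assoc]
      refine mul_le_mul_of_nonneg_left ?_ (by linarith)
      -- ‖z‖ ^ (-(a+2)) ≤ 2^(a+2) * (1+‖z‖)^(-(a+2))
      have h1 : (1+‖z‖) ≤ 2*‖z‖ := by linarith
      have h2 : (1+‖z‖) ^ (a+2) ≤ (2*‖z‖) ^ (a+2) :=
        Real.rpow_le_rpow (by linarith) h1 (by linarith)
      have h3 : ((2:ℝ)*‖z‖) ^ (a+2) = (2:ℝ)^(a+2) * ‖z‖^(a+2) :=
        Real.mul_rpow (by norm_num) hzpos.le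
      rw [Real.rpow_neg (by linarith : (0:ℝ) ≤ 1+‖z‖), Real.rpow_neg hzpos.le]
      have h4 : (1+‖z‖)^(a+2) / (2:ℝ)^(a+2) ≤ ‖z‖^(a+2) := by
        rw [div_le_iff₀ (by positivity : (0:ℝ) < (2:ℝ)^(a+2)), mul_comm]
        exact h2.trans_eq h3
      have h5 := inv_anti₀ (by positivity : (0:ℝ) < (1+‖z‖)^(a+2) / (2:ℝ)^(a+2)) h4
      rw [inv_div] at h5
      calc (‖z‖^(a+2))⁻¹ ≤ (2:ℝ)^(a+2) / (1+‖z‖)^(a+2) := h5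
        _ = (2:ℝ)^(a+2) * ((1+‖z‖)^(a+2))⁻¹ := by rw [div_eq_mul_inv]
    calc bubble N s 0 1 z * hfun N s z
        ≤ ((2:ℝ) ^ (a/2) * (1+‖z‖) ^ (-a)) * (a/2 * (2:ℝ) ^ (a+2) * (1+‖z‖) ^ (-(a+2))) := by
          apply mul_le_mul hU hh (hfun_nonneg ha hz0) (by positivity)
      _ = C * ((1+‖z‖) ^ (-a) * (1+‖z‖) ^ (-(a+2))) := by rw [hC']; ring
      _ = C * (1+‖z‖) ^ (-(2*a+2)) := by
          rw [← Real.rpow_add (by linarith : (0:ℝ) < 1+‖z‖)]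
          ring_nf

lemma change_of_var {N : ℕ} {s : ℝ}
    (Ω : Set (Euc N)) (hΩ : MeasurableSet Ω) (b : Euc N → ℝ) (x : Euc N)
    {lam : ℝ} (hlam : 0 < lam) :
    lam ^ (2*s) * (∫ y in Ω, b y * bubble N s x lam y * lam ^ (((N:ℝ) - 2*s)/2) *
        hfun N s (lam • (x - y)))
    = ∫ z, ((fun z => x - lam⁻¹ • z) ⁻¹' Ω).indicator
        (fun z => b (x - lam⁻¹ • z) * (bubble N s 0 1 z * hfun N s z)) z := by
  set a : ℝ := (N:ℝ) - 2*s with ha'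
  set G : Euc N → ℝ := fun y => b y * bubble N s x lam y * lam ^ (a/2) *
    hfun N s (lam • (x - y)) with hG'
  set g : Euc N → ℝ := Ω.indicator G with hg'
  set S : Set (Euc N) := (fun z => x - lam⁻¹ • z) ⁻¹' Ω with hS'
  set F : Euc N → ℝ := fun z => b (x - lam⁻¹ • z) * (bubble N s 0 1 z * hfun N s z) with hF'
  -- pointwise identity
  have hpt : ∀ z : Euc N, g (x - lam⁻¹ • z) = lam ^ a * S.indicator F z := by
    intro z
    by_cases hz : x - lam⁻¹ • z ∈ Ω
    · have hzS : z ∈ S := hz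
      rw [hg', Set.indicator_of_mem hz G, Set.indicator_of_mem hzS F]
      have e1 : x - (x - lam⁻¹ • z) = lam⁻¹ • z := by abel
      have e2 : lam • (lam⁻¹ • z) = z := by
        rw [smul_smul, mul_inv_cancel₀ hlam.ne', one_smul]
      have e3 : bubble N s x lam (x - lam⁻¹ • z) = lam ^ (a/2) * bubble N s 0 1 z := by
        rw [bubble, bubble_zero_one, e1, norm_smul, Real.norm_eq_abs, mul_pow, sq_abs]
        have e4 : lam ^ 2 * (lam⁻¹ ^ 2 * ‖z‖ ^ 2) = ‖z‖ ^ 2 := by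
          field_simp
        rw [e4]
        have h5 : (0:ℝ) < 1 + ‖z‖ ^ 2 := by positivity
        rw [Real.div_rpow hlam.le h5.le, div_eq_mul_inv, ← Real.rpow_neg h5.le]
      rw [hG']
      simp only []
      rw [e1, e2, e3, hF']
      have hsq : lam ^ a = lam ^ (a/2) * lam ^ (a/2) := by
        rw [← Real.rpow_add hlam]; ring_nf
      rw [hsq]; ring
    · have hzS : z ∉ S := hz
      rw [hg', Set.indicator_of_notMem hz G, Set.indicator_of_notMem hzS F, mul_zero]
  -- change of variables
  have hcs : ∫ z, g (x - lam⁻¹ • z) = (lam ^ (N:ℕ)) * ∫ y, g y := by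
    have h1 := Measure.integral_comp_smul (volume : Measure (Euc N))
      (fun w => g (x - w)) lam⁻¹
    simp only [finrank_euclideanSpace_fin, inv_pow, inv_inv, smul_eq_mul] at h1
    rw [h1, abs_of_pos (pow_pos hlam _)]
    congr 1
    have h2 : ∫ w, g (x - w) = ∫ w, g (x + w) := by
      simp_rw [sub_eq_add_neg]
      exact integral_neg_eq_self (fun w => g (x + w)) volume
    rw [h2, integral_add_left_eq_self g x]
  have key : (∫ z, S.indicator F z) = lam ^ (-a) * ((lam ^ (N:ℕ)) * ∫ y, g y) := by
    have h1 : ∀ z : Euc N, S.indicator F z = lam ^ (-a) * g (x - lam⁻¹ • z) := by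
      intro z
      rw [hpt z, ← mul_assoc, ← Real.rpow_add hlam]
      norm_num
    calc (∫ z, S.indicator F z) = ∫ z, lam ^ (-a) * g (x - lam⁻¹ • z) := by
          exact integral_congr_ae (Eventually.of_forall h1)
      _ = lam ^ (-a) * ∫ z, g (x - lam⁻¹ • z) := integral_const_mul _ _
      _ = lam ^ (-a) * ((lam ^ (N:ℕ)) * ∫ y, g y) := by rw [hcs]
  rw [key, ← integral_indicator hΩ]
  rw [← mul_assoc, ← Real.rpow_natCast lam N, ← Real.rpow_add hlam]
  congr 2
  rw [ha']
  ring

end Aux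

open Set Metric Filter Topology in
/-- Lemma B.4: `α_{N,s} := ∫_{ℝ^N} U_{0,1} h` is finite, and for
`b ∈ C(Ω̄) ∩ C¹(Ω)`,
`λ^{2s} ∫_Ω b(y) U_{x,λ}(y) λ^{(N-2s)/2} h(λ(x-y)) dy → α_{N,s} b(x)` as `λ → ∞`,
uniformly for `x` in a compact subset `K ⊆ Ω`. -/
theorem statement12 (N : ℕ) (s : ℝ) (hs0 : 0 < s) (hs1 : s < 1)
    (hN1 : 2 * s < (N : ℝ)) (hN2 : (N : ℝ) < 4 * s)
    (Ω : Set (Euc N)) (hΩo : IsOpen Ω) (hΩb : Bornology.IsBounded Ω)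
    (K : Set (Euc N)) (hK : IsCompact K) (hKΩ : K ⊆ Ω)
    (b : Euc N → ℝ) (hb₁ : ContinuousOn b (closure Ω)) (hb₂ : ContDiffOn ℝ 1 b Ω) :
    Integrable (fun y : Euc N => bubble N s 0 1 y * hfun N s y) (volume : Measure (Euc N)) ∧
      ∀ ε : ℝ, 0 < ε → ∃ Λ : ℝ, ∀ lam : ℝ, Λ ≤ lam → ∀ x ∈ K,
        |lam ^ (2 * s) *
            (∫ y in Ω, b y * bubble N s x lam y * lam ^ (((N : ℝ) - 2 * s) / 2) *
              hfun N s (lam • (x - y))) -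
          (∫ y : Euc N, bubble N s 0 1 y * hfun N s y) * b x| < ε := by
  have hInt : Integrable (fun y : Euc N => bubble N s 0 1 y * hfun N s y)
      (volume : Measure (Euc N)) := integrable_Uh hs0 hs1 hN1 hN2
  refine ⟨hInt, ?_⟩
  intro ε hε
  set f : Euc N → ℝ := fun z => bubble N s 0 1 z * hfun N s z with hf'
  set α : ℝ := ∫ z : Euc N, f z with hα'
  have hIabs : Integrable (fun z : Euc N => |f z|) volume := hInt.abs
  set I : ℝ := ∫ z : Euc N, |f z| with hI'
  have hI0 : 0 ≤ I := integral_nonneg fun z => abs_nonneg _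
  -- bound on b
  have hΩc : IsCompact (closure Ω) := hΩb.isCompact_closure
  obtain ⟨M0, hM0⟩ := hΩc.exists_bound_of_continuousOn hb₁
  set M : ℝ := max M0 1 with hM'
  have hM1 : (0:ℝ) < M := lt_of_lt_of_le one_pos (le_max_right _ _)
  have hMb : ∀ y ∈ closure Ω, |b y| ≤ M := fun y hy =>
    (hM0 y hy).trans (le_max_left _ _)
  -- uniform continuity of b
  set ε₁ : ℝ := ε / (2*(I+1)) with hε₁'
  have hε₁ : 0 < ε₁ := by positivity
  have huc : UniformContinuousOn b (closure Ω) := hΩc.uniformContinuousOn_of_continuous hb₁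
  obtain ⟨δb, hδb, hδbp⟩ := (Metric.uniformContinuousOn_iff).1 huc ε₁ hε₁
  -- compact inclusion
  obtain ⟨δK, hδK, hδKs⟩ := hK.exists_thickening_subset_open hΩo hKΩ
  set δ : ℝ := min δb δK with hδ'
  have hδ0 : 0 < δ := lt_min hδb hδK
  -- tail radius
  set ε₂ : ℝ := ε / (8*M) with hε₂'
  have hε₂ : 0 < ε₂ := by positivity
  have htends : Tendsto (fun n : ℕ => ∫ z in Metric.closedBall (0:Euc N) (n:ℝ), |f z|)
      atTop (𝓝 I) := by
    have h := MeasureTheory.tendsto_setIntegral_of_monotone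
      (s := fun n : ℕ => Metric.closedBall (0:Euc N) (n:ℝ))
      (fun n => measurableSet_closedBall)
      (fun m n hmn => Metric.closedBall_subset_closedBall (by exact_mod_cast hmn))
      (by rw [Metric.iUnion_closedBall_nat]; exact hIabs.integrableOn)
    rwa [Metric.iUnion_closedBall_nat, setIntegral_univ] at h
  obtain ⟨n₀, hn₀⟩ := (Metric.tendsto_atTop).1 htends ε₂ hε₂
  set R : ℝ := (n₀ : ℝ) with hR'
  have htail : ∫ z in (Metric.closedBall (0:Euc N) R)ᶜ, |f z| < ε₂ := by
    have hsplit := integral_add_compl (measurableSet_closedBall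
      (x := (0:Euc N)) (ε := R)) hIabs
    have hd := hn₀ n₀ le_rfl
    rw [Real.dist_eq] at hd
    have := abs_lt.1 hd
    have h2 : ∫ z in (Metric.closedBall (0:Euc N) R)ᶜ, |f z|
        = I - ∫ z in Metric.closedBall (0:Euc N) R, |f z| := by
      rw [hI']; linarith [hsplit]
    rw [h2]; linarith [this.1, this.2]
  -- choose Λ
  refine ⟨max 1 ((R+1)/δ), fun lam hlam x hx => ?_⟩
  have hlam1 : (1:ℝ) ≤ lam := le_trans (le_max_left _ _) hlam
  have hlam0 : (0:ℝ) < lam := lt_of_lt_of_le one_pos hlam1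
  have hlamR : (R+1)/δ ≤ lam := le_trans (le_max_right _ _) hlam
  have hRlam : R / lam < δ := by
    rw [div_lt_iff₀ hlam0]
    have h1 : R + 1 ≤ δ * lam := by
      rw [div_le_iff₀ hδ0] at hlamR; linarith
    linarith
  -- change of variables
  rw [change_of_var Ω hΩo.measurableSet b x hlam0]
  set S : Set (Euc N) := (fun z : Euc N => x - lam⁻¹ • z) ⁻¹' Ω with hS'
  have hSmeas : MeasurableSet S :=
    (hΩo.preimage (continuous_const.sub (continuous_id.const_smul lam⁻¹))).measurableSet
  set β : Euc N → ℝ := S.indicator (fun z => b (x - lam⁻¹ • z)) with hβ'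
  have hind : ∀ z : Euc N, S.indicator
      (fun z => b (x - lam⁻¹ • z) * (bubble N s 0 1 z * hfun N s z)) z = β z * f z := by
    intro z
    by_cases hz : z ∈ S
    · rw [Set.indicator_of_mem hz, hβ', Set.indicator_of_mem hz, hf']
    · rw [Set.indicator_of_notMem hz, hβ', Set.indicator_of_notMem hz, zero_mul]
  rw [integral_congr_ae (Filter.Eventually.of_forall hind)]
  -- measurability and bounds for β
  have hβm : AEStronglyMeasurable β volume := by
    refine (aestronglyMeasurable_indicator_iff hSmeas).2 ?_
    refine ContinuousOn.aestronglyMeasurable ?_ hSmeas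
    refine (hb₁.mono subset_closure).comp
      ((continuous_const.sub (continuous_id.const_smul lam⁻¹)).continuousOn) ?_
    intro z hz
    exact hz
  have hβb : ∀ z : Euc N, |β z| ≤ M := by
    intro z
    by_cases hz : z ∈ S
    · rw [hβ', Set.indicator_of_mem hz]
      exact hMb _ (subset_closure hz)
    · rw [hβ', Set.indicator_of_notMem hz, abs_zero]; exact hM1.le
  have hβf_int : Integrable (fun z : Euc N => β z * f z) volume := by
    refine Integrable.mono' (hIabs.const_mul M) (hβm.mul hInt.aestronglyMeasurable) ?_
    refine Filter.Eventually.of_forall fun z => ?_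
    rw [Real.norm_eq_abs, abs_mul]
    exact mul_le_mul_of_nonneg_right (hβb z) (abs_nonneg _)
  -- difference
  have hbx : |b x| ≤ M := hMb x (subset_closure (hKΩ hx))
  have hsub : (∫ z : Euc N, (β z - b x) * f z) = (∫ z : Euc N, β z * f z) - α * b x := by
    have h1 : (fun z : Euc N => (β z - b x) * f z)
        = fun z : Euc N => β z * f z - b x * f z := by funext z; ring
    rw [h1, integral_sub hβf_int (hInt.const_mul (b x)), integral_const_mul, hα', mul_comm]
  rw [← hsub]
  -- integrability of the difference integrand
  have hD_int : Integrable (fun z : Euc N => (β z - b x) * f z) volume := by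
    refine Integrable.mono' (hIabs.const_mul (2*M))
      ((hβm.sub aestronglyMeasurable_const).mul hInt.aestronglyMeasurable) ?_
    refine Filter.Eventually.of_forall fun z => ?_
    rw [Real.norm_eq_abs, abs_mul]
    refine mul_le_mul_of_nonneg_right ?_ (abs_nonneg _)
    calc |β z - b x| ≤ |β z| + |b x| := abs_sub _ _
      _ ≤ M + M := add_le_add (hβb z) hbx
      _ = 2*M := by ring
  have hg_int : Integrable (fun z : Euc N => |β z - b x| * |f z|) volume := by
    have := hD_int.abs
    simpa [abs_mul] using this
  -- split the integral
  have hsplit2 : (∫ z in Metric.closedBall (0:Euc N) R, |β z - b x| * |f z|)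
      + (∫ z in (Metric.closedBall (0:Euc N) R)ᶜ, |β z - b x| * |f z|)
      = ∫ z : Euc N, |β z - b x| * |f z| :=
    integral_add_compl measurableSet_closedBall hg_int
  -- piece 1
  have hpiece1 : (∫ z in Metric.closedBall (0:Euc N) R, |β z - b x| * |f z|) ≤ ε₁ * I := by
    have hpw : ∀ z ∈ Metric.closedBall (0:Euc N) R, |β z - b x| * |f z| ≤ ε₁ * |f z| := by
      intro z hz
      refine mul_le_mul_of_nonneg_right ?_ (abs_nonneg _)
      have hzR : ‖z‖ ≤ R := by simpa [Metric.mem_closedBall, dist_zero_right] using hz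
      have hdist : dist (x - lam⁻¹ • z) x < δ := by
        have : dist (x - lam⁻¹ • z) x = lam⁻¹ * ‖z‖ := by
          rw [dist_eq_norm]
          have : x - lam⁻¹ • z - x = -(lam⁻¹ • z) := by abel
          rw [this, norm_neg, norm_smul, Real.norm_eq_abs,
            abs_of_pos (inv_pos.2 hlam0)]
        rw [this]
        calc lam⁻¹ * ‖z‖ ≤ lam⁻¹ * R := by
              exact mul_le_mul_of_nonneg_left hzR (inv_pos.2 hlam0).le
          _ = R / lam := by rw [div_eq_mul_inv, mul_comm]
          _ < δ := hRlam
      have hyΩ : x - lam⁻¹ • z ∈ Ω := by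
        refine hδKs ?_
        rw [Metric.mem_thickening_iff]
        exact ⟨x, hx, hdist.trans_le (min_le_right _ _)⟩
      have hzS : z ∈ S := hyΩ
      have hb' : |β z - b x| < ε₁ := by
        rw [hβ', Set.indicator_of_mem hzS, ← Real.dist_eq]
        exact hδbp _ (subset_closure hyΩ) x (subset_closure (hKΩ hx))
          (hdist.trans_le (min_le_left _ _))
      exact hb'.le
    calc (∫ z in Metric.closedBall (0:Euc N) R, |β z - b x| * |f z|)
        ≤ ∫ z in Metric.closedBall (0:Euc N) R, ε₁ * |f z| :=
          setIntegral_mono_on hg_int.integrableOn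
            (hIabs.const_mul ε₁).integrableOn measurableSet_closedBall hpw
      _ = ε₁ * ∫ z in Metric.closedBall (0:Euc N) R, |f z| := integral_const_mul _ _
      _ ≤ ε₁ * I := by
          refine mul_le_mul_of_nonneg_left ?_ hε₁.le
          exact setIntegral_le_integral hIabs (Filter.Eventually.of_forall fun z => abs_nonneg _)
  -- piece 2
  have hpiece2 : (∫ z in (Metric.closedBall (0:Euc N) R)ᶜ, |β z - b x| * |f z|)
      < 2*M*ε₂ := by
    have hpw : ∀ z ∈ (Metric.closedBall (0:Euc N) R)ᶜ, |β z - b x| * |f z| ≤ 2*M * |f z| := by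
      intro z _
      refine mul_le_mul_of_nonneg_right ?_ (abs_nonneg _)
      calc |β z - b x| ≤ |β z| + |b x| := abs_sub _ _
        _ ≤ M + M := add_le_add (hβb z) hbx
        _ = 2*M := by ring
    calc (∫ z in (Metric.closedBall (0:Euc N) R)ᶜ, |β z - b x| * |f z|)
        ≤ ∫ z in (Metric.closedBall (0:Euc N) R)ᶜ, 2*M * |f z| :=
          setIntegral_mono_on hg_int.integrableOn
            (hIabs.const_mul (2*M)).integrableOn measurableSet_closedBall.compl hpw
      _ = 2*M * ∫ z in (Metric.closedBall (0:Euc N) R)ᶜ, |f z| := integral_const_mul _ _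
      _ < 2*M*ε₂ := by
          exact mul_lt_mul_of_pos_left htail (by positivity)
  -- conclude
  have habs : |∫ z : Euc N, (β z - b x) * f z| ≤ ∫ z : Euc N, |β z - b x| * |f z| := by
    rw [← Real.norm_eq_abs]
    refine (norm_integral_le_integral_norm _).trans_eq ?_
    refine integral_congr_ae (Filter.Eventually.of_forall fun z => ?_)
    simp [Real.norm_eq_abs, abs_mul]
  have h1 : ε₁ * I ≤ ε/2 := by
    rw [hε₁']
    rw [div_mul_eq_mul_div, div_le_div_iff₀ (by positivity) (by norm_num)]
    nlinarith
  have h2 : 2*M*ε₂ = ε/4 := by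
    rw [hε₂']
    field_simp
    ring
  linarith [habs, hsplit2, hpiece1, hpiece2]
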